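/- If G is (n,k)-extendable with k ≥ 1, then G is (n, k−1)-extendable. -/
import Mathlib


/-- `G` is `(n,k)`-extendable: `n + 2k ≤ |V(G)| - 2`, `|V(G)| - n` is even, and for every
set `S` of `n` vertices, `G - S` contains a `k`-matching and every `k`-matching of `G - S`
extends to a perfect matching of `G - S`. -/
def SimpleGraph.NKExtendable {V : Type*} [Finite V] (G : SimpleGraph V) (n k : ℕ) : Prop :=
  n + 2 * k ≤ Nat.card V - 2 ∧ Even (Nat.card V - n) ∧
  ∀ S : Set V, S.ncard = n →
    (∃ M : G.Subgraph, M.IsMatching ∧ Disjoint M.verts S ∧ M.edgeSet.ncard = k) ∧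
    ∀ M : G.Subgraph, M.IsMatching → Disjoint M.verts S → M.edgeSet.ncard = k →
      ∃ F : G.Subgraph, M ≤ F ∧ F.IsMatching ∧ F.verts = Sᶜ


open Set SimpleGraph

namespace NKAux

variable {V : Type*} {G : SimpleGraph V}

lemma edge_eq_of_mem {M : G.Subgraph} (hM : M.IsMatching) {x y : V} (hxy : M.Adj x y)
    {e : Sym2 V} (he : e ∈ M.edgeSet) (hx : x ∈ e) : e = s(x, y) := by
  induction e with
  | _ a b =>
    rw [SimpleGraph.Subgraph.mem_edgeSet] at he
    rcases Sym2.mem_iff.mp hx with rfl | rfl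
    · have h1 := (hM (M.edge_vert he)).unique he hxy
      rw [h1]
    · have h1 := (hM (M.edge_vert he.symm)).unique he.symm hxy
      rw [h1, Sym2.eq_swap]

lemma delete_pair_isMatching {M : G.Subgraph} (hM : M.IsMatching) {x y : V} (hxy : M.Adj x y) :
    (M.deleteVerts {x, y}).IsMatching := by
  intro v hv
  rw [SimpleGraph.Subgraph.deleteVerts_verts, Set.mem_diff] at hv
  obtain ⟨hv1, hv2⟩ := hv
  obtain ⟨w, hw1, hw2⟩ := hM hv1
  have hwxy : w ∉ ({x, y} : Set V) := by
    intro hw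
    rcases hw with rfl | rfl
    · exact hv2 (Or.inr <| by simpa using (hM (M.edge_vert hxy)).unique hw1.symm hxy)
    · exact hv2 (Or.inl <| by simpa using (hM (M.edge_vert hxy.symm)).unique hw1.symm hxy.symm)
  refine ⟨w, SimpleGraph.Subgraph.deleteVerts_adj.mpr
    ⟨hv1, hv2, M.edge_vert hw1.symm, hwxy, hw1⟩, ?_⟩
  · intro z hz
    rw [SimpleGraph.Subgraph.deleteVerts_adj] at hz
    exact hw2 z hz.2.2.2.2

lemma delete_pair_edgeSet {M : G.Subgraph} (hM : M.IsMatching) {x y : V} (hxy : M.Adj x y) :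
    (M.deleteVerts {x, y}).edgeSet = M.edgeSet \ {s(x, y)} := by
  ext e
  induction e with
  | _ a b =>
    simp only [SimpleGraph.Subgraph.mem_edgeSet, SimpleGraph.Subgraph.deleteVerts_adj,
      Set.mem_diff, Set.mem_singleton_iff]
    constructor
    · rintro ⟨ha, ha2, hb, hb2, hab⟩
      refine ⟨hab, fun hcon => ?_⟩
      rw [Sym2.eq_iff] at hcon
      rcases hcon with ⟨rfl, rfl⟩ | ⟨rfl, rfl⟩
      · exact ha2 (Or.inl rfl)
      · exact ha2 (Or.inr rfl)
    · rintro ⟨hab, hne⟩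
      have ha : a ∉ ({x, y} : Set V) := by
        intro hc
        rcases hc with rfl | rfl
        · exact hne (by rw [(hM (M.edge_vert hab)).unique hab hxy])
        · have := (hM (M.edge_vert hab)).unique hab hxy.symm
          subst this
          exact hne (Sym2.eq_swap)
      have hb : b ∉ ({x, y} : Set V) := by
        intro hc
        rcases hc with rfl | rfl
        · have := (hM (M.edge_vert hab.symm)).unique hab.symm hxy
          subst this
          exact hne (Sym2.eq_swap)
        · exact hne (by rw [(hM (M.edge_vert hab.symm)).unique hab.symm hxy.symm, Sym2.eq_swap])
      exact ⟨M.edge_vert hab, ha, M.edge_vert hab.symm, hb, hab⟩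

lemma verts_ncard_matching [Finite V] {M : G.Subgraph} (hM : M.IsMatching) :
    M.verts.ncard = 2 * M.edgeSet.ncard := by
  generalize hm : M.verts.ncard = m
  induction m using Nat.strong_induction_on generalizing M with
  | _ m ih =>
    rcases Set.eq_empty_or_nonempty M.verts with he | ⟨v, hv⟩
    · have : M.edgeSet = ∅ := by
        ext e
        induction e with
        | _ a b =>
          simp only [SimpleGraph.Subgraph.mem_edgeSet, Set.mem_empty_iff_false, iff_false]
          intro hab
          exact absurd (M.edge_vert hab) (he ▸ Set.notMem_empty a)
      simp [← hm, he, this]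
    · obtain ⟨w, hw1, -⟩ := hM hv
      have hvw : v ≠ w := (M.adj_sub hw1).ne
      have hsub : ({v, w} : Set V) ⊆ M.verts := by
        rintro z (rfl | rfl)
        · exact hv
        · exact M.edge_vert hw1.symm
      have hvc : (M.deleteVerts {v, w}).verts.ncard = m - 2 := by
        rw [SimpleGraph.Subgraph.deleteVerts_verts, Set.ncard_diff hsub, hm,
          Set.ncard_pair hvw]
      have hec : (M.deleteVerts {v, w}).edgeSet.ncard = M.edgeSet.ncard - 1 := by
        rw [delete_pair_edgeSet hM hw1, Set.ncard_diff (by simpa using hw1)]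
        simp
      have hm2 : 2 ≤ m := by
        rw [← hm]
        calc 2 = ({v, w} : Set V).ncard := (Set.ncard_pair hvw).symm
        _ ≤ M.verts.ncard := Set.ncard_le_ncard hsub
      have he1 : 1 ≤ M.edgeSet.ncard := (Set.ncard_pos (Set.toFinite _)).mpr ⟨s(v, w), hw1⟩
      have := ih (m - 2) (by omega) (delete_pair_isMatching hM hw1) hvc
      omega

end NKAux

namespace NKAux

open SimpleGraph.Subgraph

variable {V : Type*} {G : SimpleGraph V}

lemma sup_edge [Finite V] {M : G.Subgraph} (hM : M.IsMatching) {u v : V} (huv : G.Adj u v)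
    (hu : u ∉ M.verts) (hv : v ∉ M.verts) :
    (M ⊔ G.subgraphOfAdj huv).IsMatching ∧
    (M ⊔ G.subgraphOfAdj huv).verts = M.verts ∪ {u, v} ∧
    (M ⊔ G.subgraphOfAdj huv).edgeSet.ncard = M.edgeSet.ncard + 1 := by
  have hdisj : Disjoint M.support (G.subgraphOfAdj huv).support := by
    rw [hM.support_eq_verts, (IsMatching.subgraphOfAdj huv).support_eq_verts,
      subgraphOfAdj_verts]
    rw [Set.disjoint_right]
    rintro a (rfl | rfl) <;> assumption
  refine ⟨hM.sup (IsMatching.subgraphOfAdj huv) hdisj, by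
    rw [verts_sup, subgraphOfAdj_verts], ?_⟩
  rw [Subgraph.edgeSet_sup, edgeSet_subgraphOfAdj, Set.union_singleton,
    Set.ncard_insert_of_notMem (fun hc => hu (mem_verts_of_mem_edge hc (by simp)))]

lemma path_swap [Finite V] {F : G.Subgraph} (hF : F.IsMatching) (m : ℕ) :
    ∀ N : G.Subgraph, N.IsMatching → N.edgeSet.ncard = m →
      N.verts ⊆ F.verts → ∀ u x : V, u ∉ N.verts → x ∈ N.verts → F.Adj u x →
      ∃ (W : G.Subgraph) (u' w : V), W.IsMatching ∧
        W.verts = N.verts ∪ {u, u'} ∧ W.edgeSet.ncard = N.edgeSet.ncard + 1 ∧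
        w ∈ N.verts ∧ F.Adj w u' ∧ u' ∉ N.verts ∧ u' ≠ u := by
  induction m using Nat.strong_induction_on with
  | _ m ih =>
    intro N hN hNm hNsub u x hu hx hux
    obtain ⟨y, hy1, -⟩ := hN hx
    have hxy : x ≠ y := (N.adj_sub hy1).ne
    have hyv : y ∈ N.verts := N.edge_vert hy1.symm
    obtain ⟨z, hz1, -⟩ := hF (hNsub hyv)
    have hyz : y ≠ z := (F.adj_sub hz1).ne
    have hzx : z ≠ x := by
      rintro rfl
      have : y = u := (hF (F.edge_vert hux.symm)).unique hz1.symm hux.symm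
      exact hu (this ▸ hyv)
    have hzu : z ≠ u := by
      rintro rfl
      have : y = x := (hF (F.edge_vert hux)).unique hz1.symm hux
      exact hxy this.symm
    set N' := N.deleteVerts {x, y} with hN'def
    have hN'm : N'.IsMatching := delete_pair_isMatching hN hy1
    have hN'v : N'.verts = N.verts \ {x, y} := SimpleGraph.Subgraph.deleteVerts_verts
    have hN'e : N'.edgeSet = N.edgeSet \ {s(x, y)} := delete_pair_edgeSet hN hy1
    have hxyN : s(x, y) ∈ N.edgeSet := hy1
    have hN'c : N'.edgeSet.ncard = m - 1 := by
      rw [hN'e, Set.ncard_diff_singleton_of_mem hxyN, hNm]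
    have hm1 : 1 ≤ m := hNm ▸ (Set.ncard_pos (Set.toFinite _)).mpr ⟨s(x, y), hxyN⟩
    have hGux : G.Adj u x := F.adj_sub hux
    have huN' : u ∉ N'.verts := by rw [hN'v]; rintro ⟨hc, -⟩; exact hu hc
    have hxN' : x ∉ N'.verts := by rw [hN'v]; rintro ⟨-, hc⟩; exact hc (Or.inl rfl)
    have hyN' : y ∉ N'.verts := by rw [hN'v]; rintro ⟨-, hc⟩; exact hc (Or.inr rfl)
    by_cases hzN : z ∈ N.verts
    · -- recursive case
      have hzN' : z ∈ N'.verts := by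
        rw [hN'v]
        exact ⟨hzN, by rintro (rfl | rfl) <;> simp_all⟩
      obtain ⟨W', u', w, hW'm, hW'v, hW'c, hwN', hwu', hu'N', hu'y⟩ :=
        ih (m - 1) (by omega) N' hN'm hN'c
          (hN'v ▸ Set.diff_subset.trans hNsub) y z hyN' hzN' hz1
      have hwN : w ∈ N.verts := by
        have := hwN'; rw [hN'v] at this; exact this.1
      have hwxy : w ∉ ({x, y} : Set V) := by
        have := hwN'; rw [hN'v] at this; exact this.2
      have hu'x : u' ≠ x := by
        rintro rfl
        have : w = u := (hF (F.edge_vert hux.symm)).unique hwu'.symm hux.symm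
        exact hu (this ▸ hwN)
      have hu'u : u' ≠ u := by
        rintro rfl
        have : w = x := (hF (F.edge_vert hux)).unique hwu'.symm hux
        exact hwxy (this ▸ Or.inl rfl)
      have hu'N : u' ∉ N.verts := by
        intro hc
        apply hu'N'
        rw [hN'v]
        exact ⟨hc, by rintro (rfl | rfl); exacts [hu'x rfl, hu'y rfl]⟩
      have huW' : u ∉ W'.verts := by
        rw [hW'v, hN'v]
        rintro (⟨hc, -⟩ | hc)
        · exact hu hc
        rcases Set.mem_insert_iff.mp hc with hc | hc
        · exact hu (hc ▸ hyv)
        · exact hu'u ((Set.mem_singleton_iff.mp hc).symm)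
      have hxW' : x ∉ W'.verts := by
        rw [hW'v, hN'v]
        rintro (⟨-, hc⟩ | hc)
        · exact hc (Or.inl rfl)
        rcases Set.mem_insert_iff.mp hc with hc | hc
        · exact hxy hc
        · exact hu'x ((Set.mem_singleton_iff.mp hc).symm)
      obtain ⟨hWm, hWv, hWc⟩ := sup_edge hW'm hGux huW' hxW'
      refine ⟨W' ⊔ G.subgraphOfAdj hGux, u', w, hWm, ?_, by omega, hwN, hwu', hu'N, hu'u⟩
      rw [hWv, hW'v, hN'v]
      ext a
      simp only [Set.mem_union, Set.mem_diff, Set.mem_insert_iff, Set.mem_singleton_iff,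
        not_or]
      constructor
      · rintro ((⟨ha, -, -⟩ | (rfl | rfl)) | (rfl | rfl))
        · exact Or.inl ha
        · exact Or.inl hyv
        · exact Or.inr (Or.inr rfl)
        · exact Or.inr (Or.inl rfl)
        · exact Or.inl hx
      · rintro (ha | (rfl | rfl))
        · by_cases hax : a = x
          · exact Or.inr (Or.inr hax)
          · by_cases hay : a = y
            · exact Or.inl (Or.inr (Or.inl hay))
            · exact Or.inl (Or.inl ⟨ha, hax, hay⟩)
        · exact Or.inr (Or.inl rfl)
        · exact Or.inl (Or.inr (Or.inr rfl))
    · -- base case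
      have hGyz : G.Adj y z := F.adj_sub hz1
      obtain ⟨hM1m, hM1v, hM1c⟩ := sup_edge hN'm hGux huN' hxN'
      set M1 := N' ⊔ G.subgraphOfAdj hGux with hM1def
      have hyM1 : y ∉ M1.verts := by
        rw [hM1v]
        rintro (hc | hc)
        · exact hyN' hc
        rcases Set.mem_insert_iff.mp hc with hc | hc
        · exact hu (hc ▸ hyv)
        · exact hxy ((Set.mem_singleton_iff.mp hc).symm)
      have hzM1 : z ∉ M1.verts := by
        rw [hM1v]
        rintro (hc | hc)
        · exact hzN (by have := hc; rw [hN'v] at this; exact this.1)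
        rcases Set.mem_insert_iff.mp hc with hc | hc
        · exact hzu hc
        · exact hzx (Set.mem_singleton_iff.mp hc)
      obtain ⟨hWm, hWv, hWc⟩ := sup_edge hM1m hGyz hyM1 hzM1
      refine ⟨M1 ⊔ G.subgraphOfAdj hGyz, z, y, hWm, ?_, by
          rw [hWc, hM1c, hN'c]; omega, hyv, hz1, hzN, hzu⟩
      rw [hWv, hM1v, hN'v]
      ext a
      simp only [Set.mem_union, Set.mem_diff, Set.mem_insert_iff, Set.mem_singleton_iff,
        not_or]
      constructor
      · rintro ((⟨ha, -, -⟩ | (rfl | rfl)) | (rfl | rfl))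
        · exact Or.inl ha
        · exact Or.inr (Or.inl rfl)
        · exact Or.inl hx
        · exact Or.inl hyv
        · exact Or.inr (Or.inr rfl)
      · rintro (ha | (rfl | rfl))
        · by_cases hax : a = x
          · exact Or.inl (Or.inr (Or.inr hax))
          · by_cases hay : a = y
            · exact Or.inr (Or.inl hay)
            · exact Or.inl (Or.inl ⟨ha, hax, hay⟩)
        · exact Or.inl (Or.inr (Or.inl rfl))
        · exact Or.inr (Or.inr rfl)

end NKAux

theorem nkExtendable_k_sub_one {V : Type*} [Finite V]
    (G : SimpleGraph V) (n k : ℕ) (hk : 1 ≤ k)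
    (h : G.NKExtendable n k) :
    G.NKExtendable n (k - 1) := by
  obtain ⟨h1, h2, h3⟩ := h
  refine ⟨by omega, h2, ?_⟩
  intro S hS
  obtain ⟨⟨M₀, hM₀m, hM₀d, hM₀c⟩, hext⟩ := h3 S hS
  constructor
  · -- existence of a (k-1)-matching
    obtain ⟨e, he⟩ : M₀.edgeSet.Nonempty := Set.nonempty_of_ncard_ne_zero (by omega)
    induction e using Sym2.ind with
    | _ x y =>
      have he' : M₀.Adj x y := SimpleGraph.Subgraph.mem_edgeSet.mp he
      refine ⟨M₀.deleteVerts {x, y}, NKAux.delete_pair_isMatching hM₀m he', ?_, ?_⟩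
      · exact Disjoint.mono_left
          (by rw [SimpleGraph.Subgraph.deleteVerts_verts]; exact Set.diff_subset) hM₀d
      · rw [NKAux.delete_pair_edgeSet hM₀m he', Set.ncard_diff_singleton_of_mem he, hM₀c]
  · -- extension of (k-1)-matchings
    intro M hMm hMd hMc
    obtain ⟨F, hM₀F, hFm, hFv⟩ := hext M₀ hM₀m hM₀d hM₀c
    have hMsub : M.verts ⊆ Sᶜ := fun a ha => Set.disjoint_left.mp hMd ha
    have hScc : S.ncard + Sᶜ.ncard = Nat.card V := Set.ncard_add_ncard_compl S
    have hMverts : M.verts.ncard = 2 * (k - 1) := by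
      rw [NKAux.verts_ncard_matching hMm, hMc]
    have hOcard : (Sᶜ \ M.verts).ncard = Sᶜ.ncard - 2 * (k - 1) := by
      rw [Set.ncard_diff hMsub, hMverts]
    have hO4 : 4 ≤ (Sᶜ \ M.verts).ncard := by omega
    by_cases hedge : ∃ u v, G.Adj u v ∧ u ∉ S ∧ v ∉ S ∧ u ∉ M.verts ∧ v ∉ M.verts
    · obtain ⟨u, v, huv, huS, hvS, huM, hvM⟩ := hedge
      obtain ⟨hWm, hWv, hWc⟩ := NKAux.sup_edge hMm huv huM hvM
      obtain ⟨F', hle, hF'm, hF'v⟩ := hext (M ⊔ G.subgraphOfAdj huv) hWm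
        (by
          rw [hWv, Set.disjoint_union_left]
          exact ⟨hMd, by rw [Set.disjoint_left]; rintro a (rfl | ha) <;>
            [exact huS; exact (Set.mem_singleton_iff.mp ha ▸ hvS)]⟩)
        (by rw [hWc, hMc]; omega)
      exact ⟨F', le_sup_left.trans hle, hF'm, hF'v⟩
    · exfalso
      apply hedge
      obtain ⟨u, huO⟩ : (Sᶜ \ M.verts).Nonempty :=
        Set.nonempty_of_ncard_ne_zero (by omega)
      obtain ⟨x, hux, -⟩ := hFm (show u ∈ F.verts by rw [hFv]; exact huO.1)
      have hxS : x ∈ Sᶜ := by rw [← hFv]; exact F.edge_vert hux.symm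
      have hxM : x ∈ M.verts := by
        by_contra hxM
        exact hedge ⟨u, x, F.adj_sub hux, huO.1, hxS, huO.2, hxM⟩
      obtain ⟨W, u', w, hWm, hWv, hWc, hwN, hwu', hu'N, hu'u⟩ :=
        NKAux.path_swap hFm (k - 1) M hMm hMc (by rw [hFv]; exact hMsub)
          u x huO.2 hxM hux
      have hu'S : u' ∈ Sᶜ := by rw [← hFv]; exact F.edge_vert hwu'.symm
      have huS : u ∈ Sᶜ := huO.1
      have hWsub : W.verts ⊆ Sᶜ := by
        rw [hWv]
        rintro a (ha | ha)
        · exact hMsub ha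
        rcases Set.mem_insert_iff.mp ha with rfl | ha
        · exact huS
        · exact (Set.mem_singleton_iff.mp ha) ▸ hu'S
      obtain ⟨F₂, hWF, hF₂m, hF₂v⟩ := hext W hWm
        (Set.disjoint_left.mpr fun a ha => hWsub ha)
        (by rw [hWc, hMc]; omega)
      obtain ⟨t, htO, htuu⟩ := Set.not_subset.mp
        (show ¬ (Sᶜ \ M.verts) ⊆ {u, u'} by
          intro hc
          have := Set.ncard_le_ncard hc (Set.toFinite _)
          have h2' : ({u, u'} : Set V).ncard ≤ 2 := by
            apply (Set.ncard_insert_le _ _).trans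
            simp
          omega)
      obtain ⟨t', htt', -⟩ := hF₂m (show t ∈ F₂.verts by rw [hF₂v]; exact htO.1)
      have htW : t ∉ W.verts := by
        rw [hWv]
        rintro (ha | ha)
        · exact htO.2 ha
        · exact htuu ha
      have ht'W : t' ∉ W.verts := by
        intro hc
        obtain ⟨s', hs', -⟩ := hWm hc
        have hadj : F₂.Adj t' s' := hWF.2 hs'
        have : s' = t := (hF₂m (F₂.edge_vert htt'.symm)).unique hadj htt'.symm
        exact htW (this ▸ W.edge_vert hs'.symm)
      have ht'S : t' ∈ Sᶜ := by rw [← hF₂v]; exact F₂.edge_vert htt'.symm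
      have ht'M : t' ∉ M.verts := fun hc =>
        ht'W (hWv ▸ Set.mem_union_left _ hc)
      exact ⟨t, t', F₂.adj_sub htt', htO.1, ht'S, htO.2, ht'M⟩
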